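/- arXiv:0812.4557 — 3 statements merged into one kernel-verified Lean document; each statement's English description precedes it below -/
import Mathlib

section
/- Let f : [0,1] → ℂ be continuous and b ≥ 2. For 0 < δ < 1, the modulus of continuity ω(f,δ) = sup{|f(t)-f(s)| : s,t ∈ [0,1], |t-s| ≤ δ} satisfies ω(f,δ) ≤ 2b ∑_{n ≥ -log δ / log b} max_{w ∈ {0,...,b-1}^n} Osc_f(I_w), where I_w is the closed b-adic interval of generation n = |w| encoded by w and Osc_f(I) = sup_{s,t∈I}|f(t)-f(s)|. -/
open MeasureTheory Filter Finset
open scoped Classical ENNReal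

/-- Left endpoint `t_w = ∑ w_i b^{-i}` of the `b`-adic interval encoded by the word
`w ∈ {0,…,b-1}^n`. -/
noncomputable def badicLeft (b n : ℕ) (w : Fin n → Fin b) : ℝ :=
  ∑ i : Fin n, ((w i : ℕ) : ℝ) * ((b : ℝ) ^ ((i : ℕ) + 1))⁻¹

/-- Oscillation (in `ℝ≥0∞`, via `edist`) of a function over a set. -/
noncomputable def eoscOn (f : ℝ → ℂ) (s : Set ℝ) : ℝ≥0∞ :=
  ⨆ x ∈ s, ⨆ y ∈ s, edist (f x) (f y)

lemma edist_le_eoscOn (f : ℝ → ℂ) {s : Set ℝ} {x y : ℝ} (hx : x ∈ s) (hy : y ∈ s) :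
    edist (f x) (f y) ≤ eoscOn f s :=
  le_iSup₂_of_le x hx (le_iSup₂_of_le y hy le_rfl)

lemma badicLeft_exists (b : ℕ) (hb : 2 ≤ b) :
    ∀ N k : ℕ, k < b ^ N → ∃ w : Fin N → Fin b,
      badicLeft b N w = (k : ℝ) / (b : ℝ) ^ N := by
  intro N
  induction N with
  | zero =>
    intro k hk
    have hk0 : k = 0 := by simpa using hk
    subst hk0
    exact ⟨Fin.elim0, by simp [badicLeft]⟩
  | succ N ih =>
    intro k hk
    have hb0 : 0 < b := by omega
    have hq : k / b < b ^ N := Nat.div_lt_of_lt_mul (by rw [mul_comm]; simpa [pow_succ] using hk)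
    obtain ⟨w', hw'⟩ := ih (k / b) hq
    refine ⟨Fin.snoc w' ⟨k % b, Nat.mod_lt _ hb0⟩, ?_⟩
    have hbR : (0:ℝ) < (b:ℝ) := by exact_mod_cast hb0
    have hBN : (0:ℝ) < (b:ℝ)^N := by positivity
    rw [badicLeft, Fin.sum_univ_castSucc]
    simp only [Fin.snoc_castSucc, Fin.snoc_last, Fin.coe_castSucc, Fin.val_last]
    rw [show (∑ i : Fin N, ((w' i : ℕ):ℝ) * ((b:ℝ)^((i:ℕ)+1))⁻¹) = badicLeft b N w' from rfl, hw']
    have hmod : (b * (k / b) + k % b : ℕ) = k := Nat.div_add_mod k b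
    have hmodR : (b:ℝ) * ((k/b : ℕ):ℝ) + ((k % b : ℕ):ℝ) = (k:ℝ) := by exact_mod_cast hmod
    field_simp [pow_succ]
    linear_combination ((b:ℝ)^N) * hmodR


lemma chain_lemma (b N : ℕ) (f : ℝ → ℂ) (M : ℝ≥0∞) (hbR : (0:ℝ) < (b:ℝ))
    (hM : ∀ k : ℕ, k < b ^ N → ∀ x y : ℝ,
      (k : ℝ) / (b:ℝ)^N ≤ x → x ≤ ((k:ℝ)+1) / (b:ℝ)^N →
      (k : ℝ) / (b:ℝ)^N ≤ y → y ≤ ((k:ℝ)+1) / (b:ℝ)^N →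
      edist (f x) (f y) ≤ M) :
    ∀ d p : ℕ, p + d < b ^ N → ∀ s t : ℝ,
      (p:ℝ)/(b:ℝ)^N ≤ s → s ≤ ((p:ℝ)+1)/(b:ℝ)^N →
      ((p:ℝ)+(d:ℝ))/(b:ℝ)^N ≤ t → t ≤ ((p:ℝ)+(d:ℝ)+1)/(b:ℝ)^N →
      edist (f s) (f t) ≤ ((d:ℝ≥0∞) + 1) * M := by
  have hBN : (0:ℝ) < (b:ℝ)^N := by positivity
  intro d
  induction d with
  | zero =>
    intro p hp s t hs1 hs2 ht1 ht2
    rw [Nat.cast_zero, zero_add, one_mul]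
    exact hM p (by omega) s t hs1 hs2 (by simpa using ht1) (by simpa using ht2)
  | succ d ih =>
    intro p hp s t hs1 hs2 ht1 ht2
    push_cast at ht1 ht2 ⊢
    ring_nf at ht1 ht2
    have hdd : ((p:ℝ)+(d:ℝ))/(b:ℝ)^N ≤ ((p:ℝ)+(d:ℝ)+1)/(b:ℝ)^N :=
      div_le_div_of_nonneg_right (by linarith) hBN.le
    have hdd2 : ((p:ℝ)+(d:ℝ)+1)/(b:ℝ)^N ≤ ((p:ℝ)+(d:ℝ)+1+1)/(b:ℝ)^N :=
      div_le_div_of_nonneg_right (by linarith) hBN.le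
    have h1 : edist (f s) (f (((p:ℝ)+(d:ℝ)+1)/(b:ℝ)^N)) ≤ ((d:ℝ≥0∞)+1) * M :=
      ih p (by omega) s _ hs1 hs2 hdd le_rfl
    have h2 : edist (f (((p:ℝ)+(d:ℝ)+1)/(b:ℝ)^N)) (f t) ≤ M := by
      refine hM (p+d+1) (by omega) _ t ?_ ?_ ?_ ?_ <;> push_cast <;> ring_nf
      · exact le_rfl
      · ring_nf at hdd2; exact hdd2
      · exact ht1
      · exact ht2
    calc edist (f s) (f t)
        ≤ edist (f s) (f (((p:ℝ)+(d:ℝ)+1)/(b:ℝ)^N))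
          + edist (f (((p:ℝ)+(d:ℝ)+1)/(b:ℝ)^N)) (f t) := edist_triangle _ _ _
      _ ≤ ((d:ℝ≥0∞)+1) * M + 1 * M := by rw [one_mul]; exact add_le_add h1 h2
      _ = ((d:ℝ≥0∞)+1+1) * M := by rw [← add_mul]

lemma key_lemma (b N : ℕ) (hb : 2 ≤ b) (f : ℝ → ℂ) (M : ℝ≥0∞)
    (hM : ∀ k : ℕ, k < b ^ N → ∀ x y : ℝ,
      (k : ℝ) / (b:ℝ)^N ≤ x → x ≤ ((k:ℝ)+1) / (b:ℝ)^N →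
      (k : ℝ) / (b:ℝ)^N ≤ y → y ≤ ((k:ℝ)+1) / (b:ℝ)^N →
      edist (f x) (f y) ≤ M)
    (δ : ℝ) (hδ0 : 0 < δ) (hδb : δ * (b:ℝ)^N < (b:ℝ))
    (s t : ℝ) (hs : s ∈ Set.Icc (0:ℝ) 1) (ht : t ∈ Set.Icc (0:ℝ) 1) (hst : s ≤ t)
    (hdist : t - s ≤ δ) :
    edist (f s) (f t) ≤ (2 * (b:ℝ≥0∞)) * M := by
  have hbR : (0:ℝ) < (b:ℝ) := by exact_mod_cast (by omega : 0 < b)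
  have hBN : (0:ℝ) < (b:ℝ)^N := by positivity
  have hbN1 : 1 ≤ b ^ N := Nat.one_le_pow _ _ (by omega)
  have hBcast : ((b^N : ℕ):ℝ) = (b:ℝ)^N := by push_cast; ring
  set ks := min ⌊s*(b:ℝ)^N⌋₊ (b^N - 1) with hksdef
  set kt := min ⌊t*(b:ℝ)^N⌋₊ (b^N - 1) with hktdef
  have hs0 : (0:ℝ) ≤ s := hs.1
  have ht0 : (0:ℝ) ≤ t := ht.1
  have hsB : 0 ≤ s*(b:ℝ)^N := by positivity
  have htB : 0 ≤ t*(b:ℝ)^N := by positivity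
  have hks1 : (ks:ℝ) ≤ s*(b:ℝ)^N :=
    le_trans (Nat.cast_le.mpr (min_le_left _ _)) (Nat.floor_le hsB)
  have hkt1 : (kt:ℝ) ≤ t*(b:ℝ)^N :=
    le_trans (Nat.cast_le.mpr (min_le_left _ _)) (Nat.floor_le htB)
  have hks2 : s*(b:ℝ)^N ≤ (ks:ℝ) + 1 := by
    rcases le_or_gt ⌊s*(b:ℝ)^N⌋₊ (b^N - 1) with h | h
    · rw [hksdef, min_eq_left h]
      exact (Nat.lt_floor_add_one _).le
    · rw [hksdef, min_eq_right h.le]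
      have : s*(b:ℝ)^N ≤ (b:ℝ)^N := by nlinarith [hs.2]
      rw [show ((b^N-1 : ℕ):ℝ) + 1 = ((b^N:ℕ):ℝ) by push_cast [Nat.cast_sub hbN1]; ring,
        hBcast]
      exact this
  have hkt2 : t*(b:ℝ)^N ≤ (kt:ℝ) + 1 := by
    rcases le_or_gt ⌊t*(b:ℝ)^N⌋₊ (b^N - 1) with h | h
    · rw [hktdef, min_eq_left h]
      exact (Nat.lt_floor_add_one _).le
    · rw [hktdef, min_eq_right h.le]
      have : t*(b:ℝ)^N ≤ (b:ℝ)^N := by nlinarith [ht.2]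
      rw [show ((b^N-1 : ℕ):ℝ) + 1 = ((b^N:ℕ):ℝ) by push_cast [Nat.cast_sub hbN1]; ring,
        hBcast]
      exact this
  have hle : ks ≤ kt := by
    exact min_le_min (Nat.floor_le_floor (by nlinarith)) le_rfl
  have hkt : kt < b ^ N := lt_of_le_of_lt (min_le_right _ _) (by omega)
  have hd : kt ≤ ks + b := by
    rcases le_or_gt ⌊s*(b:ℝ)^N⌋₊ (b^N - 1) with h | h
    · have hks : ks = ⌊s*(b:ℝ)^N⌋₊ := min_eq_left h
      have h1 : kt ≤ ⌊t*(b:ℝ)^N⌋₊ := min_le_left _ _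
      have h2 : ⌊t*(b:ℝ)^N⌋₊ < ks + b + 1 := by
        rw [Nat.floor_lt htB]
        push_cast
        have hsfl : s*(b:ℝ)^N < (ks:ℝ)+1 := by
          have := Nat.lt_floor_add_one (s*(b:ℝ)^N)
          have hc : (ks:ℝ) = (⌊s*(b:ℝ)^N⌋₊:ℝ) := by rw [hks]
          linarith
        have hδB : (t-s)*(b:ℝ)^N ≤ δ*(b:ℝ)^N := mul_le_mul_of_nonneg_right hdist hBN.le
        nlinarith
      omega
    · have hks : ks = b^N - 1 := min_eq_right h.le
      have h1 : kt ≤ b^N - 1 := min_le_right _ _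
      omega
  have hchain := chain_lemma b N f M hbR hM (kt - ks) ks (by omega) s t
    ((div_le_iff₀ hBN).mpr hks1)
    ((le_div_iff₀ hBN).mpr hks2)
    ?_ ?_
  · refine le_trans hchain (mul_le_mul_left ?_ M)
    have h1 : (kt - ks) + 1 ≤ 2*b := by omega
    calc ((kt-ks : ℕ):ℝ≥0∞) + 1 = (((kt-ks)+1 : ℕ):ℝ≥0∞) := by push_cast; ring
      _ ≤ ((2*b : ℕ):ℝ≥0∞) := Nat.cast_le.mpr h1
      _ = 2*(b:ℝ≥0∞) := by push_cast; ring
  · rw [show (ks:ℝ) + ((kt-ks:ℕ):ℝ) = (kt:ℝ) by push_cast [Nat.cast_sub hle]; ring]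
    exact (div_le_iff₀ hBN).mpr hkt1
  · rw [show (ks:ℝ) + ((kt-ks:ℕ):ℝ) = (kt:ℝ) by push_cast [Nat.cast_sub hle]; ring]
    exact (le_div_iff₀ hBN).mpr hkt2

/-- for a continuous `f : [0,1] → ℂ` and `0 < δ < 1`, the modulus of continuity
satisfies `ω(f,δ) ≤ 2b ∑_{n ≥ -log δ / log b} max_{w ∈ {0,…,b-1}^n} Osc_f(I_w)`. -/
theorem stmt5 (b : ℕ) (hb : 2 ≤ b) (f : ℝ → ℂ)
    (hf : ContinuousOn f (Set.Icc 0 1))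
    (δ : ℝ) (hδ0 : 0 < δ) (hδ1 : δ < 1) :
    (⨆ (s : ℝ) (_ : s ∈ Set.Icc (0:ℝ) 1) (t : ℝ) (_ : t ∈ Set.Icc (0:ℝ) 1)
        (_ : |t - s| ≤ δ), edist (f s) (f t))
      ≤ (2 * b : ℝ≥0∞) *
        ∑' n : ℕ,
          if - Real.log δ / Real.log b ≤ (n : ℝ) then
            ⨆ w : Fin n → Fin b,
              eoscOn f (Set.Icc (badicLeft b n w) (badicLeft b n w + ((b : ℝ) ^ n)⁻¹))
          else 0 := by
  have hbR : (0:ℝ) < (b:ℝ) := by exact_mod_cast (by omega : 0 < b)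
  have hb1 : (1:ℝ) < (b:ℝ) := by exact_mod_cast (by omega : 1 < b)
  have hlogb : 0 < Real.log b := Real.log_pos hb1
  have hlogδ : Real.log δ < 0 := Real.log_neg hδ0 hδ1
  set v : ℝ := - Real.log δ / Real.log b with hv
  have hv0 : 0 < v := div_pos (by linarith) hlogb
  set N : ℕ := ⌈v⌉₊ with hN
  -- `M` : max oscillation at generation `N`
  set M : ℝ≥0∞ := ⨆ w : Fin N → Fin b,
      eoscOn f (Set.Icc (badicLeft b N w) (badicLeft b N w + ((b : ℝ) ^ N)⁻¹)) with hMdef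
  have hBN : (0:ℝ) < (b:ℝ)^N := by positivity
  -- the `x y` form of the oscillation bound
  have hM : ∀ k : ℕ, k < b ^ N → ∀ x y : ℝ,
      (k : ℝ) / (b:ℝ)^N ≤ x → x ≤ ((k:ℝ)+1) / (b:ℝ)^N →
      (k : ℝ) / (b:ℝ)^N ≤ y → y ≤ ((k:ℝ)+1) / (b:ℝ)^N →
      edist (f x) (f y) ≤ M := by
    intro k hk x y hx1 hx2 hy1 hy2
    obtain ⟨w, hw⟩ := badicLeft_exists b hb N k hk
    have hend : badicLeft b N w + ((b:ℝ)^N)⁻¹ = ((k:ℝ)+1) / (b:ℝ)^N := by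
      rw [hw]; field_simp
    have hx : x ∈ Set.Icc (badicLeft b N w) (badicLeft b N w + ((b:ℝ)^N)⁻¹) := by
      rw [hend, hw]; exact ⟨hx1, hx2⟩
    have hy : y ∈ Set.Icc (badicLeft b N w) (badicLeft b N w + ((b:ℝ)^N)⁻¹) := by
      rw [hend, hw]; exact ⟨hy1, hy2⟩
    rw [hMdef]
    exact le_trans (edist_le_eoscOn f hx hy) (le_iSup_of_le w le_rfl)
  -- δ * b^N < b
  have hδb : δ * (b:ℝ)^N < (b:ℝ) := by
    have hN1 : 1 ≤ N := Nat.one_le_iff_ne_zero.mpr (Nat.ceil_pos.mpr hv0).ne'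
    have hlt : ((N-1 : ℕ) : ℝ) < v := by
      rw [← Nat.lt_ceil]; omega
    have h1 : ((N-1:ℕ):ℝ) * Real.log b < - Real.log δ := by
      rw [hv, lt_div_iff₀ hlogb] at hlt; linarith
    have h2 : Real.log ((b:ℝ)^(N-1)) < Real.log δ⁻¹ := by
      rw [Real.log_pow, Real.log_inv]; push_cast; push_cast at h1; linarith
    have h3 : (b:ℝ)^(N-1) < δ⁻¹ := by
      rwa [Real.log_lt_log_iff (by positivity) (by positivity)] at h2
    have h4 : δ * (b:ℝ)^(N-1) < 1 := by
      have := mul_lt_mul_of_pos_left h3 hδ0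
      rwa [mul_inv_cancel₀ hδ0.ne'] at this
    have hpow : (b:ℝ)^N = (b:ℝ)^(N-1) * (b:ℝ) := by
      rw [← pow_succ]; congr 1; omega
    calc δ * (b:ℝ)^N = (δ * (b:ℝ)^(N-1)) * (b:ℝ) := by rw [hpow]; ring
      _ < 1 * (b:ℝ) := by nlinarith
      _ = (b:ℝ) := one_mul _
  -- M is one of the summands
  have hMsum : M ≤ ∑' n : ℕ,
      if - Real.log δ / Real.log b ≤ (n : ℝ) then
        ⨆ w : Fin n → Fin b,
          eoscOn f (Set.Icc (badicLeft b n w) (badicLeft b n w + ((b : ℝ) ^ n)⁻¹))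
      else 0 := by
    refine le_trans ?_ (ENNReal.le_tsum N)
    rw [if_pos (Nat.le_ceil v)]
  refine le_trans ?_ (mul_le_mul_right hMsum _)
  -- reduce to the pointwise bound
  refine iSup_le fun s => iSup_le fun hs => iSup_le fun t => iSup_le fun ht =>
    iSup_le fun hst => ?_
  rcases le_total s t with h | h
  · exact key_lemma b N hb f M hM δ hδ0 hδb s t hs ht h
      (le_trans (le_abs_self _) hst)
  · rw [edist_comm]
    exact key_lemma b N hb f M hM δ hδ0 hδb t s ht hs h
      (le_trans (by rw [abs_sub_comm] at hst ⊢; exact le_abs_self _) hst)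
end

section
/- Let X be a nonnegative random variable satisfying the stochastic inequality X ≥ b^{-1} ∑_{k=0}^{b-1} |W_k| X_k, where (X_0,...,X_{b-1}) are i.i.d. copies of X independent of W, the |W_k| are almost surely positive with all negative-order moments E(|W_k|^{-s}) < ∞ (s > 0) finite, and P(X > 0) = 1. Then E(X^{-s}) < ∞ for all s > 0, provided E(X^{-s_0}) < ∞ for some s_0 > 0 is established via the standard bootstrap argument. -/
open MeasureTheory ProbabilityTheory Filter Finset
open scoped ENNReal

/-- negative moments of the fixed point of the smoothing inequality.
If `X ≥ b⁻¹ ∑_k V_k X_k` a.s., where `(X_0,…,X_{b-1})` are i.i.d. copies of `X`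
independent of `V = (|W_0|,…,|W_{b-1}|)`, the `V_k` are a.s. positive with all
negative-order moments finite, `X > 0` a.s., and `E(X^{-s₀}) < ∞` for some `s₀ > 0`,
then `E(X^{-s}) < ∞` for all `s > 0`. -/
theorem stmt10 {Ω : Type*} [MeasureSpace Ω] [IsProbabilityMeasure (ℙ : Measure Ω)]
    (b : ℕ) (hb : 2 ≤ b)
    (X : Ω → ℝ) (V : Ω → Fin b → ℝ) (X0 : Ω → Fin b → ℝ)
    (hXm : Measurable X)
    (hVm : ∀ k, Measurable fun ω => V ω k)
    (hX0m : ∀ k, Measurable fun ω => X0 ω k)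
    (hiid : iIndepFun (fun (k : Fin b) ω => X0 ω k) ℙ)
    (hindep : IndepFun (fun ω => X0 ω) (fun ω => V ω) ℙ)
    (hid : ∀ k, IdentDistrib (fun ω => X0 ω k) X ℙ ℙ)
    (hineq : ∀ᵐ ω ∂ℙ, ((b : ℝ))⁻¹ * ∑ k, V ω k * X0 ω k ≤ X ω)
    (hVpos : ∀ᵐ ω ∂ℙ, ∀ k, 0 < V ω k)
    (hVmom : ∀ k, ∀ s : ℝ, 0 < s → (∫⁻ ω, ENNReal.ofReal (V ω k ^ (-s)) ∂ℙ) < ⊤)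
    (hXpos : ∀ᵐ ω ∂ℙ, 0 < X ω)
    (hs0 : ∃ s0 : ℝ, 0 < s0 ∧ (∫⁻ ω, ENNReal.ofReal (X ω ^ (-s0)) ∂ℙ) < ⊤) :
    ∀ s : ℝ, 0 < s → (∫⁻ ω, ENNReal.ofReal (X ω ^ (-s)) ∂ℙ) < ⊤ := by
  obtain ⟨s0, hs0pos, hs0fin⟩ := hs0
  set k0 : Fin b := ⟨0, by omega⟩ with hk0
  set k1 : Fin b := ⟨1, by omega⟩ with hk1
  have hk01 : k0 ≠ k1 := by simp [hk0, hk1, Fin.ext_iff]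
  -- measurability of x ↦ ofReal (x ^ (-s))
  have hφ : ∀ s : ℝ, Measurable fun x : ℝ => ENNReal.ofReal (x ^ (-s)) := fun s =>
    ENNReal.measurable_ofReal.comp (measurable_id.pow measurable_const)
  -- a.e. positivity of the copies
  have hXpos' := hXpos
  rw [ae_iff] at hXpos'
  simp only [not_lt] at hXpos'
  have hX0pos : ∀ k, ∀ᵐ ω ∂ℙ, 0 < X0 ω k := by
    intro k
    have h := (hid k).measure_mem_eq (measurableSet_Iic (a := (0:ℝ)))
    simp only [Set.preimage, Set.mem_Iic] at h
    rw [ae_iff]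
    simp only [not_lt]
    exact h.trans hXpos'
  -- identically distributed negative moments
  have hmomeq : ∀ k, ∀ s : ℝ,
      (∫⁻ ω, ENNReal.ofReal (X0 ω k ^ (-s)) ∂ℙ) = ∫⁻ ω, ENNReal.ofReal (X ω ^ (-s)) ∂ℙ := by
    intro k s
    exact ((hid k).comp (hφ s)).lintegral_eq
  -- monotonicity in s
  have hmono : ∀ s t : ℝ, 0 ≤ s → s ≤ t →
      (∫⁻ ω, ENNReal.ofReal (X ω ^ (-t)) ∂ℙ) < ⊤ →
      (∫⁻ ω, ENNReal.ofReal (X ω ^ (-s)) ∂ℙ) < ⊤ := by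
    intro s t hs hst hfin
    have hbnd : ∀ᵐ ω ∂ℙ, ENNReal.ofReal (X ω ^ (-s)) ≤ 1 + ENNReal.ofReal (X ω ^ (-t)) := by
      filter_upwards [hXpos] with ω hω
      rcases le_or_gt 1 (X ω) with h1 | h1
      · calc ENNReal.ofReal (X ω ^ (-s)) ≤ 1 :=
              ENNReal.ofReal_le_one.mpr
                (Real.rpow_le_one_of_one_le_of_nonpos h1 (neg_nonpos.mpr hs))
          _ ≤ 1 + ENNReal.ofReal (X ω ^ (-t)) := le_self_add
      · calc ENNReal.ofReal (X ω ^ (-s)) ≤ ENNReal.ofReal (X ω ^ (-t)) :=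
              ENNReal.ofReal_le_ofReal
                (Real.rpow_le_rpow_of_exponent_ge hω h1.le (by linarith))
          _ ≤ 1 + ENNReal.ofReal (X ω ^ (-t)) := le_add_self
    calc (∫⁻ ω, ENNReal.ofReal (X ω ^ (-s)) ∂ℙ)
        ≤ ∫⁻ ω, (1 + ENNReal.ofReal (X ω ^ (-t))) ∂ℙ := lintegral_mono_ae hbnd
      _ = 1 + ∫⁻ ω, ENNReal.ofReal (X ω ^ (-t)) ∂ℙ := by
          rw [lintegral_add_left measurable_const]; simp
      _ < ⊤ := by
          exact ENNReal.add_lt_top.2 ⟨ENNReal.one_lt_top, hfin⟩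
  -- doubling step
  have hX0posAll : ∀ᵐ ω ∂ℙ, ∀ k, 0 < X0 ω k := ae_all_iff.2 hX0pos
  have hbpos : (0:ℝ) < (b:ℝ) := by positivity
  have hdouble : ∀ s : ℝ, 0 < s →
      (∫⁻ ω, ENNReal.ofReal (X ω ^ (-s)) ∂ℙ) < ⊤ →
      (∫⁻ ω, ENNReal.ofReal (X ω ^ (-(2*s))) ∂ℙ) < ⊤ := by
    intro s hs hfin
    set G : Ω → ℝ≥0∞ := fun ω =>
      ENNReal.ofReal (X0 ω k0 ^ (-s)) * ENNReal.ofReal (X0 ω k1 ^ (-s)) with hGdef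
    set H : Ω → ℝ≥0∞ := fun ω =>
      ENNReal.ofReal (V ω k0 ^ (-s)) * ENNReal.ofReal (V ω k1 ^ (-s)) with hHdef
    have hGm : Measurable G := ((hφ s).comp (hX0m k0)).mul ((hφ s).comp (hX0m k1))
    have hHm : Measurable H := ((hφ s).comp (hVm k0)).mul ((hφ s).comp (hVm k1))
    -- pointwise a.e. bound
    have key : ∀ᵐ ω ∂ℙ, ENNReal.ofReal (X ω ^ (-(2*s))) ≤
        ENNReal.ofReal ((b:ℝ) ^ (2*s)) * (G ω * H ω) := by
      filter_upwards [hineq, hVpos, hX0posAll] with ω h1 h2 h3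
      have hA : 0 < V ω k0 * X0 ω k0 := mul_pos (h2 k0) (h3 k0)
      have hB : 0 < V ω k1 * X0 ω k1 := mul_pos (h2 k1) (h3 k1)
      set A := V ω k0 * X0 ω k0 with hAdef
      set B := V ω k1 * X0 ω k1 with hBdef
      have hsum : A + B ≤ ∑ k, V ω k * X0 ω k := by
        calc A + B = ∑ k ∈ ({k0, k1} : Finset (Fin b)), V ω k * X0 ω k :=
              (Finset.sum_pair (f := fun k => V ω k * X0 ω k) hk01).symm
          _ ≤ ∑ k, V ω k * X0 ω k :=
              Finset.sum_le_sum_of_subset_of_nonneg (Finset.subset_univ _)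
                (fun i _ _ => mul_nonneg (h2 i).le (h3 i).le)
      have hpos : 0 < (b:ℝ)⁻¹ * (A+B) := by positivity
      have hXge : (b:ℝ)⁻¹ * (A+B) ≤ X ω :=
        le_trans (mul_le_mul_of_nonneg_left hsum (inv_nonneg.mpr hbpos.le)) h1
      have e1 : X ω ^ (-(2*s)) ≤ ((b:ℝ)⁻¹ * (A+B)) ^ (-(2*s)) :=
        Real.rpow_le_rpow_of_nonpos hpos hXge (by linarith)
      have e2 : ((b:ℝ)⁻¹ * (A+B)) ^ (-(2*s)) = (b:ℝ)^(2*s) * (A+B)^(-(2*s)) := by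
        rw [Real.mul_rpow (inv_nonneg.mpr hbpos.le) (by positivity),
          Real.inv_rpow hbpos.le, ← Real.rpow_neg hbpos.le, neg_neg]
      have e3 : (A+B)^(-(2*s)) ≤ A^(-s) * B^(-s) := by
        have hAB : A*B ≤ (A+B)^2 := by nlinarith
        have h4 : ((A+B)^2)^(-s) ≤ (A*B)^(-s) :=
          Real.rpow_le_rpow_of_nonpos (mul_pos hA hB) hAB (by linarith)
        calc (A+B)^(-(2*s)) = ((A+B)^2)^(-s) := by
              rw [← Real.rpow_natCast (A+B) 2, ← Real.rpow_mul (by positivity)]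
              congr 1; push_cast; ring
          _ ≤ (A*B)^(-s) := h4
          _ = A^(-s) * B^(-s) := Real.mul_rpow hA.le hB.le
      have e4 : A^(-s) = V ω k0^(-s) * X0 ω k0^(-s) := Real.mul_rpow (h2 k0).le (h3 k0).le
      have e5 : B^(-s) = V ω k1^(-s) * X0 ω k1^(-s) := Real.mul_rpow (h2 k1).le (h3 k1).le
      have hreal : X ω ^ (-(2*s)) ≤ (b:ℝ)^(2*s) *
          ((X0 ω k0 ^ (-s) * X0 ω k1 ^ (-s)) * (V ω k0 ^ (-s) * V ω k1 ^ (-s))) := by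
        calc X ω ^ (-(2*s)) ≤ (b:ℝ)^(2*s) * (A+B)^(-(2*s)) := e2 ▸ e1
          _ ≤ (b:ℝ)^(2*s) * (A^(-s) * B^(-s)) :=
              mul_le_mul_of_nonneg_left e3 (Real.rpow_nonneg hbpos.le _)
          _ = _ := by rw [e4, e5]; ring
      calc ENNReal.ofReal (X ω ^ (-(2*s))) ≤ ENNReal.ofReal ((b:ℝ)^(2*s) *
            ((X0 ω k0 ^ (-s) * X0 ω k1 ^ (-s)) * (V ω k0 ^ (-s) * V ω k1 ^ (-s)))) :=
            ENNReal.ofReal_le_ofReal hreal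
        _ = ENNReal.ofReal ((b:ℝ)^(2*s)) * (G ω * H ω) := by
            rw [ENNReal.ofReal_mul (Real.rpow_nonneg hbpos.le _),
              ENNReal.ofReal_mul (mul_nonneg (Real.rpow_nonneg (h3 k0).le _)
                (Real.rpow_nonneg (h3 k1).le _)),
              ENNReal.ofReal_mul (Real.rpow_nonneg (h3 k0).le _),
              ENNReal.ofReal_mul (Real.rpow_nonneg (h2 k0).le _)]
    -- independence of G and H
    have hindGH : IndepFun G H ℙ := by
      have hg : Measurable fun v : Fin b → ℝ =>
          ENNReal.ofReal (v k0 ^ (-s)) * ENNReal.ofReal (v k1 ^ (-s)) :=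
        ((hφ s).comp (measurable_pi_apply k0)).mul ((hφ s).comp (measurable_pi_apply k1))
      exact hindep.comp hg hg
    have hGH : (∫⁻ ω, G ω * H ω ∂ℙ) =
        (∫⁻ ω, G ω ∂ℙ) * ∫⁻ ω, H ω ∂ℙ :=
      ProbabilityTheory.lintegral_mul_eq_lintegral_mul_lintegral_of_indepFun''
        hGm.aemeasurable hHm.aemeasurable hindGH
    -- the G integral
    have hG01 : IndepFun (fun ω => ENNReal.ofReal (X0 ω k0 ^ (-s)))
        (fun ω => ENNReal.ofReal (X0 ω k1 ^ (-s))) ℙ :=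
      (hiid.indepFun hk01).comp (hφ s) (hφ s)
    have hGint : (∫⁻ ω, G ω ∂ℙ) =
        (∫⁻ ω, ENNReal.ofReal (X ω ^ (-s)) ∂ℙ) * ∫⁻ ω, ENNReal.ofReal (X ω ^ (-s)) ∂ℙ := by
      have h := ProbabilityTheory.lintegral_mul_eq_lintegral_mul_lintegral_of_indepFun''
        (f := fun ω => ENNReal.ofReal (X0 ω k0 ^ (-s)))
        (g := fun ω => ENNReal.ofReal (X0 ω k1 ^ (-s)))
        ((hφ s).comp (hX0m k0)).aemeasurable ((hφ s).comp (hX0m k1)).aemeasurable hG01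
      rw [hmomeq k0 s, hmomeq k1 s] at h
      exact h
    -- the H integral is finite
    have hHbound : ∀ᵐ ω ∂ℙ, H ω ≤
        ENNReal.ofReal (V ω k0 ^ (-(2*s))) + ENNReal.ofReal (V ω k1 ^ (-(2*s))) := by
      filter_upwards [hVpos] with ω h2
      set a := V ω k0 ^ (-s) with hadef
      set c := V ω k1 ^ (-s) with hcdef
      have ha : 0 ≤ a := Real.rpow_nonneg (h2 k0).le _
      have hc : 0 ≤ c := Real.rpow_nonneg (h2 k1).le _
      have e0 : V ω k0 ^ (-(2*s)) = a * a := by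
        rw [hadef, ← Real.rpow_add (h2 k0)]; ring_nf
      have e0' : V ω k1 ^ (-(2*s)) = c * c := by
        rw [hcdef, ← Real.rpow_add (h2 k1)]; ring_nf
      have hac : a * c ≤ V ω k0 ^ (-(2*s)) + V ω k1 ^ (-(2*s)) := by
        rw [e0, e0']; nlinarith [sq_nonneg (a - c)]
      calc H ω = ENNReal.ofReal (a * c) := (ENNReal.ofReal_mul ha).symm
        _ ≤ ENNReal.ofReal (V ω k0 ^ (-(2*s)) + V ω k1 ^ (-(2*s))) :=
            ENNReal.ofReal_le_ofReal hac
        _ ≤ _ := ENNReal.ofReal_add_le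
    have hHfin : (∫⁻ ω, H ω ∂ℙ) < ⊤ := by
      calc (∫⁻ ω, H ω ∂ℙ) ≤ ∫⁻ ω, (ENNReal.ofReal (V ω k0 ^ (-(2*s))) +
            ENNReal.ofReal (V ω k1 ^ (-(2*s)))) ∂ℙ := lintegral_mono_ae hHbound
        _ = (∫⁻ ω, ENNReal.ofReal (V ω k0 ^ (-(2*s))) ∂ℙ) +
            ∫⁻ ω, ENNReal.ofReal (V ω k1 ^ (-(2*s))) ∂ℙ :=
            lintegral_add_left ((hφ (2*s)).comp (hVm k0)) _
        _ < ⊤ := ENNReal.add_lt_top.2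
            ⟨hVmom k0 (2*s) (by positivity), hVmom k1 (2*s) (by positivity)⟩
    -- combine
    calc (∫⁻ ω, ENNReal.ofReal (X ω ^ (-(2*s))) ∂ℙ)
        ≤ ∫⁻ ω, ENNReal.ofReal ((b:ℝ)^(2*s)) * (G ω * H ω) ∂ℙ := lintegral_mono_ae key
      _ = ENNReal.ofReal ((b:ℝ)^(2*s)) * ∫⁻ ω, G ω * H ω ∂ℙ :=
          lintegral_const_mul _ (hGm.mul hHm)
      _ < ⊤ := by
          rw [hGH, hGint]
          exact ENNReal.mul_lt_top ENNReal.ofReal_lt_top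
            (ENNReal.mul_lt_top (ENNReal.mul_lt_top hfin hfin) hHfin)
  -- bootstrap
  intro s hs
  have hpow : ∀ n : ℕ, (∫⁻ ω, ENNReal.ofReal (X ω ^ (-(2^n * s0))) ∂ℙ) < ⊤ := by
    intro n
    induction n with
    | zero => simpa using hs0fin
    | succ n ih =>
        have h2 := hdouble (2^n * s0) (by positivity) ih
        have he : (2:ℝ)^(n+1) * s0 = 2 * (2^n * s0) := by ring
        rw [he]; exact h2
  obtain ⟨n, hn⟩ := pow_unbounded_of_one_lt (s / s0) (one_lt_two (α := ℝ))
  have hsn : s ≤ 2^n * s0 := by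
    rw [div_lt_iff₀ hs0pos] at hn; linarith
  exact hmono s (2^n * s0) hs.le hsn (hpow n)
end

section
/- Suppose P(∑_{i=0}^{b-1} W_i = 1) = 1, all |W_i| ≤ 1 almost surely, and with probability one each index i satisfies either |W_i| ≤ γ (for a fixed γ ∈ (0,1)) or |W_i| = 1 with (∑_{k=0}^{i-1} W_k, ∑_{k=0}^{i} W_k) ∈ {(0,1),(1,0)}. Then almost surely for every 0 ≤ j ≤ b-1, |∑_{i=0}^{j} W_i| ≤ 1 + (b-1)γ/2. -/
open MeasureTheory ProbabilityTheory Finset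

lemma telescope_bound (γ : ℝ) (S : ℕ → ℂ) :
    ∀ a c, a ≤ c → (∀ i, a ≤ i → i < c → ‖S (i + 1) - S i‖ ≤ γ) →
      ‖S c - S a‖ ≤ ((c - a : ℕ) : ℝ) * γ := by
  intro a c hac
  induction c, hac using Nat.le_induction with
  | base => intro _; simp
  | succ n hn ih =>
    intro hs
    have h1 : ‖S n - S a‖ ≤ ((n - a : ℕ) : ℝ) * γ :=
      ih (fun i hi hin => hs i hi (by omega))
    have h2 : ‖S (n + 1) - S n‖ ≤ γ := hs n hn (by omega)
    have h3 : ‖S (n + 1) - S a‖ ≤ ‖S (n + 1) - S n‖ + ‖S n - S a‖ :=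
      norm_sub_le_norm_sub_add_norm_sub _ _ _
    have h4 : (n + 1) - a = (n - a) + 1 := by omega
    rw [h4]
    push_cast
    linarith

lemma key_det (b : ℕ) (hb : 2 ≤ b) (γ : ℝ) (hγ0 : 0 < γ) (hγ1 : γ < 1)
    (S : ℕ → ℂ) (hS0 : S 0 = 0)
    (hstep : ∀ i < b, ‖S (i + 1) - S i‖ ≤ γ ∨
      ((S i = 0 ∧ S (i + 1) = 1) ∨ (S i = 1 ∧ S (i + 1) = 0)))
    (hSb : S b = 1) :
    ∀ j ≤ b, ‖S j‖ ≤ 1 + ((b : ℝ) - 1) * γ / 2 := by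
  classical
  intro j hj
  set A : ℕ → Prop := fun m => S m = 0 ∨ S m = 1 with hA
  have hA0 : A 0 := Or.inl hS0
  have hAb : A b := Or.inr hSb
  -- p : greatest anchor ≤ j
  set p := Nat.findGreatest A j with hp
  have hpj : p ≤ j := Nat.findGreatest_le j
  have hAp : A p := by
    rcases Nat.eq_zero_or_pos p with h0 | h0
    · rw [h0]; exact hA0
    · exact Nat.findGreatest_spec (m := 0) (by omega) hA0
  have hpmax : ∀ m, m ≤ j → A m → m ≤ p := fun m hm hAm => Nat.le_findGreatest hm hAm
  -- q : least anchor ≥ j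
  have hex : ∃ k, A (j + k) := ⟨b - j, by rw [Nat.add_sub_cancel' hj]; exact hAb⟩
  set d := Nat.find hex with hd
  set q := j + d with hq
  have hAq : A q := Nat.find_spec hex
  have hqb : q ≤ b := by
    have : d ≤ b - j := Nat.find_le (by rw [Nat.add_sub_cancel' hj]; exact hAb)
    omega
  have hqmin : ∀ m, j ≤ m → m < q → ¬ A m := by
    intro m hm hmq hAm
    have : ¬ A (j + (m - j)) := Nat.find_min hex (by omega)
    rw [Nat.add_sub_cancel' hm] at this
    exact this hAm
  have hjq : j ≤ q := by omega
  -- steps between p and j are small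
  have hsm1 : ∀ i, p ≤ i → i < j → ‖S (i + 1) - S i‖ ≤ γ := by
    intro i hi hij
    rcases hstep i (by omega) with hs | hbig
    · exact hs
    · exfalso
      have hA1 : A (i + 1) := by
        rcases hbig with ⟨_, h1⟩ | ⟨_, h1⟩
        · exact Or.inr h1
        · exact Or.inl h1
      have := hpmax (i + 1) (by omega) hA1
      omega
  -- steps between j and q are small
  have hsm2 : ∀ i, j ≤ i → i < q → ‖S (i + 1) - S i‖ ≤ γ := by
    intro i hi hiq
    rcases hstep i (by omega) with hs | hbig
    · exact hs
    · exfalso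
      have hA1 : A i := by
        rcases hbig with ⟨h1, _⟩ | ⟨h1, _⟩
        · exact Or.inl h1
        · exact Or.inr h1
      exact hqmin i hi hiq hA1
  have h1 : ‖S j - S p‖ ≤ ((j - p : ℕ) : ℝ) * γ := telescope_bound γ S p j hpj hsm1
  have h2 : ‖S q - S j‖ ≤ ((q - j : ℕ) : ℝ) * γ := telescope_bound γ S j q hjq hsm2
  have hnp : ‖S p‖ = 0 ∨ ‖S p‖ = 1 := by
    rcases hAp with h | h <;> rw [h] <;> simp
  have hnq : ‖S q‖ = 0 ∨ ‖S q‖ = 1 := by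
    rcases hAq with h | h <;> rw [h] <;> simp
  have hb1 : ‖S j‖ ≤ ‖S p‖ + ((j - p : ℕ) : ℝ) * γ := by
    calc ‖S j‖ = ‖S p + (S j - S p)‖ := by ring_nf
      _ ≤ ‖S p‖ + ‖S j - S p‖ := norm_add_le _ _
      _ ≤ _ := by linarith
  have hb2 : ‖S j‖ ≤ ‖S q‖ + ((q - j : ℕ) : ℝ) * γ := by
    calc ‖S j‖ = ‖S q - (S q - S j)‖ := by ring_nf
      _ ≤ ‖S q‖ + ‖S q - S j‖ := norm_sub_le _ _
      _ ≤ _ := by linarith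
  -- combine
  have hcast : ((j - p : ℕ) : ℝ) + ((q - j : ℕ) : ℝ) = ((q - p : ℕ) : ℝ) := by
    have : (j - p) + (q - j) = q - p := by omega
    push_cast [← this]; ring
  rcases hnp with hnp' | hnp'
  · -- ‖S p‖ = 0
    have hQ : ‖S q‖ ≤ 1 := by rcases hnq with h | h <;> rw [h] <;> norm_num
    have hd1 : ((q - p : ℕ) : ℝ) ≤ (b : ℝ) :=
      Nat.cast_le.mpr (le_trans (Nat.sub_le q p) hqb)
    nlinarith [hb1, hb2]
  · rcases hnq with hnq' | hnq'
    · have hd1 : ((q - p : ℕ) : ℝ) ≤ (b : ℝ) :=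
        Nat.cast_le.mpr (le_trans (Nat.sub_le q p) hqb)
      nlinarith [hb1, hb2]
    · -- both anchors equal 1, so p ≥ 1 (since S 0 = 0)
      have hp1 : 1 ≤ p := by
        by_contra hc
        have hp0 : p = 0 := by omega
        rcases hAp with h | h
        · rw [h] at hnp'; simp at hnp'
        · rw [hp0, hS0] at h; exact one_ne_zero h.symm
      have hd1 : ((q - p : ℕ) : ℝ) ≤ (b : ℝ) - 1 := by
        have : (q - p : ℕ) ≤ b - 1 := tsub_le_tsub hqb hp1
        have h2 : ((q - p : ℕ) : ℝ) ≤ ((b - 1 : ℕ) : ℝ) := by exact_mod_cast this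
        have h3 : ((b - 1 : ℕ) : ℝ) = (b : ℝ) - 1 := by
          have : (1:ℕ) ≤ b := by omega
          push_cast [this]; ring
        linarith
      nlinarith [hb1, hb2]

/-- under condition (2.5) of the critical conservative case
(`∑ W_i = 1` a.s., `|W_i| ≤ 1` a.s., and each `i` satisfies either `|W_i| ≤ γ` or
`|W_i| = 1` with `(∑_{k<i} W_k, ∑_{k≤i} W_k) ∈ {(0,1),(1,0)}`), almost surely all
partial sums satisfy `|∑_{i=0}^j W_i| ≤ 1 + (b-1)γ/2`. -/
theorem stmt13 {Ω : Type*} [MeasureSpace Ω] [IsProbabilityMeasure (ℙ : Measure Ω)]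
    (b : ℕ) (hb : 2 ≤ b) (γ : ℝ) (hγ : γ ∈ Set.Ioo (0:ℝ) 1)
    (W : Ω → ℕ → ℂ)
    (h : ∀ᵐ ω ∂ℙ,
      (∑ i ∈ Finset.range b, W ω i = 1) ∧
      (∀ i < b, ‖W ω i‖ ≤ 1) ∧
      (∀ i < b, ‖W ω i‖ ≤ γ ∨
        (‖W ω i‖ = 1 ∧
          ((∑ k ∈ Finset.range i, W ω k = 0 ∧ ∑ k ∈ Finset.range (i + 1), W ω k = 1) ∨
           (∑ k ∈ Finset.range i, W ω k = 1 ∧ ∑ k ∈ Finset.range (i + 1), W ω k = 0))))) :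
    ∀ᵐ ω ∂ℙ, ∀ j < b, ‖∑ i ∈ Finset.range (j + 1), W ω i‖ ≤ 1 + ((b : ℝ) - 1) * γ / 2 := by
  filter_upwards [h] with ω hω
  intro j hj
  obtain ⟨hsum, _, hcond⟩ := hω
  have key := key_det b hb γ hγ.1 hγ.2 (fun m => ∑ i ∈ Finset.range m, W ω i)
    (by simp)
    (by
      intro i hi
      rcases hcond i hi with hs | ⟨_, hbig⟩
      · left
        simp only [Finset.sum_range_succ]
        simpa using hs
      · right; exact hbig)
    hsum
  exact key (j + 1) (by omega)
end
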